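/- Fix k ≥ 1 and let p_1 < p_2 < ... denote the primes in increasing order. Then the averages (1/n)·∑_{j=1}^{n} |μ̃_k(j)| converge, as n → ∞, to ∏_{i=1}^{k} (1 - 1/p_i²). -/

import Mathlib

open ArithmeticFunction Finset Filter

/-- `nthPrime k` is the `k`-th prime in the increasing enumeration of the primes,
indexed from 1 (so `nthPrime 1 = 2`, `nthPrime 2 = 3`, ...). -/
noncomputable def nthPrime (k : ℕ) : ℕ := Nat.nth Nat.Prime (k - 1)

/-- The `p_k`-smooth part of `n`: the product of all prime powers `p ^ (ν_p n)` in the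
factorization of `n` with `p ≤ p_k`. -/
noncomputable def smoothPart (k n : ℕ) : ℕ :=
  n.factorization.prod fun p e => if p ≤ nthPrime k then p ^ e else 1

/-- The `k`-th Möbius prime-function: writing `n = s · m` with `s` the `p_k`-smooth part of `n`
and `m` coprime to all primes `≤ p_k`, it equals `μ s` if `m = 1` and `-μ s` if `m > 1`. -/
noncomputable def mobiusP (k n : ℕ) : ℤ :=
  if n / smoothPart k n = 1 then moebius (smoothPart k n) else -moebius (smoothPart k n)

lemma smoothPart_dvd (k n : ℕ) : smoothPart k n ∣ n := by
  rcases eq_or_ne n 0 with rfl | hn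
  · simp
  · conv_rhs => rw [← Nat.factorization_prod_pow_eq_self hn]
    unfold smoothPart Finsupp.prod
    apply Finset.prod_dvd_prod_of_dvd
    intro p _
    simp only
    split
    · exact dvd_rfl
    · exact one_dvd _

lemma pow_factorization_dvd_smoothPart {k p : ℕ} (n : ℕ) (hp : p ≤ nthPrime k) :
    p ^ n.factorization p ∣ smoothPart k n := by
  by_cases hs : p ∈ n.factorization.support
  · unfold smoothPart Finsupp.prod
    have := Finset.dvd_prod_of_mem
      (fun q => if q ≤ nthPrime k then q ^ n.factorization q else 1) hs
    simpa [if_pos hp] using this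
  · simp [Finsupp.notMem_support_iff.mp hs]

lemma le_of_prime_dvd_smoothPart {k n q : ℕ} (hq : q.Prime) (h : q ∣ smoothPart k n) :
    q ≤ nthPrime k := by
  unfold smoothPart Finsupp.prod at h
  obtain ⟨p, hps, hdvd⟩ := hq.prime.exists_mem_finset_dvd h
  simp only at hdvd
  by_cases hp : p ≤ nthPrime k
  · rw [if_pos hp] at hdvd
    have hpp : p.Prime := Nat.prime_of_mem_primeFactors (by
      rwa [Nat.support_factorization] at hps)
    have : q = p := (Nat.prime_dvd_prime_iff_eq hq hpp).mp (hq.dvd_of_dvd_pow hdvd)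
    omega
  · rw [if_neg hp] at hdvd
    exact absurd (Nat.le_of_dvd one_pos hdvd) (by have := hq.two_le; omega)

lemma sq_dvd_smoothPart_iff {k n p : ℕ} (hn : n ≠ 0) (hp : p.Prime) :
    p * p ∣ smoothPart k n ↔ p ≤ nthPrime k ∧ p * p ∣ n := by
  constructor
  · intro h
    have h1 : p ≤ nthPrime k := le_of_prime_dvd_smoothPart hp (dvd_trans (dvd_mul_right p p) h)
    exact ⟨h1, h.trans (smoothPart_dvd k n)⟩
  · rintro ⟨h1, h2⟩
    have : p ^ 2 ∣ p ^ n.factorization p := by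
      apply pow_dvd_pow
      rw [← Nat.Prime.pow_dvd_iff_le_factorization hp hn]
      simpa [sq] using h2
    calc p * p = p ^ 2 := by ring
      _ ∣ p ^ n.factorization p := this
      _ ∣ smoothPart k n := pow_factorization_dvd_smoothPart n h1

lemma squarefree_smoothPart_iff {k n : ℕ} (hn : n ≠ 0) :
    Squarefree (smoothPart k n) ↔ ∀ p : ℕ, p.Prime → p ≤ nthPrime k → ¬ p * p ∣ n := by
  rw [Nat.squarefree_iff_prime_squarefree]
  constructor
  · intro h p hp hle hdvd
    exact h p hp ((sq_dvd_smoothPart_iff hn hp).mpr ⟨hle, hdvd⟩)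
  · intro h p hp hdvd
    obtain ⟨h1, h2⟩ := (sq_dvd_smoothPart_iff hn hp).mp hdvd
    exact h p hp h1 h2

lemma prime_le_nthPrime_iff {k : ℕ} (hk : 1 ≤ k) (p : ℕ) (hp : p.Prime) :
    p ≤ nthPrime k ↔ ∃ i ∈ Finset.Icc 1 k, p = nthPrime i := by
  constructor
  · intro h
    refine ⟨Nat.count Nat.Prime p + 1, ?_, ?_⟩
    · simp only [Finset.mem_Icc]
      constructor
      · omega
      · have hle : Nat.nth Nat.Prime (Nat.count Nat.Prime p) ≤ Nat.nth Nat.Prime (k - 1) := by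
          rw [Nat.nth_count hp]; exact h
        have := (Nat.nth_le_nth Nat.infinite_setOf_prime).mp hle
        omega
    · simp [nthPrime, Nat.nth_count hp]
  · rintro ⟨i, hi, rfl⟩
    simp only [Finset.mem_Icc] at hi
    exact (Nat.nth_le_nth Nat.infinite_setOf_prime).mpr (by omega)

lemma abs_mobiusP {k j : ℕ} (hk : 1 ≤ k) (hj : j ≠ 0) :
    |(mobiusP k j : ℝ)| =
      ∏ i ∈ Finset.Icc 1 k, (if (nthPrime i) ^ 2 ∣ j then (0:ℝ) else 1) := by
  have habs : |(mobiusP k j : ℝ)| = |((moebius (smoothPart k j) : ℤ) : ℝ)| := by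
    unfold mobiusP
    split <;> push_cast <;> simp [abs_neg]
  rw [habs]
  by_cases hsq : Squarefree (smoothPart k j)
  · rw [ArithmeticFunction.moebius_apply_of_squarefree hsq]
    push_cast
    rw [abs_pow, abs_neg, abs_one, one_pow]
    rw [eq_comm]
    apply Finset.prod_eq_one
    intro i hi
    rw [if_neg]
    intro hdvd
    have := (squarefree_smoothPart_iff hj).mp hsq (nthPrime i) (Nat.prime_nth_prime _)
      ((prime_le_nthPrime_iff hk _ (Nat.prime_nth_prime _)).mpr ⟨i, hi, rfl⟩)
    exact this (by rw [← sq]; exact hdvd)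
  · rw [ArithmeticFunction.moebius_eq_zero_of_not_squarefree hsq]
    push_cast
    rw [abs_zero, eq_comm]
    rw [squarefree_smoothPart_iff hj] at hsq
    push_neg at hsq
    obtain ⟨p, hp, hle, hdvd⟩ := hsq
    obtain ⟨i, hi, rfl⟩ := (prime_le_nthPrime_iff hk p hp).mp hle
    exact Finset.prod_eq_zero hi (by rw [if_pos (by rw [sq]; exact hdvd)])

lemma tendsto_nat_div_div {D : ℕ} (hD : 0 < D) :
    Tendsto (fun n : ℕ => ((n / D : ℕ) : ℝ) / n) atTop (nhds (1 / D)) := by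
  have hDR : (0:ℝ) < D := by exact_mod_cast hD
  apply tendsto_of_tendsto_of_tendsto_of_le_of_le'
    (g := fun n : ℕ => 1 / (D:ℝ) - 1 / n) (h := fun _ : ℕ => 1 / (D:ℝ))
  · have : Tendsto (fun n : ℕ => 1 / (n:ℝ)) atTop (nhds 0) := tendsto_one_div_atTop_nhds_zero_nat
    simpa using (tendsto_const_nhds (x := 1 / (D:ℝ))).sub this
  · exact tendsto_const_nhds
  · filter_upwards [eventually_ge_atTop 1] with n hn
    have hnR : (0:ℝ) < n := by exact_mod_cast hn
    have e : (D:ℝ) * ((n / D : ℕ):ℝ) + ((n % D : ℕ):ℝ) = n := by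
      exact_mod_cast Nat.div_add_mod n D
    have hr : ((n % D : ℕ):ℝ) < D := by exact_mod_cast Nat.mod_lt n hD
    have h1 : (n:ℝ)/D - 1 ≤ ((n / D : ℕ):ℝ) := by
      rw [sub_le_iff_le_add, div_le_iff₀ hDR]
      nlinarith
    have h2 : ((n:ℝ)/D - 1)/n ≤ ((n / D : ℕ):ℝ)/n := by gcongr
    calc 1/(D:ℝ) - 1/n = ((n:ℝ)/D - 1)/n := by field_simp
      _ ≤ ((n / D : ℕ):ℝ)/n := h2
  · filter_upwards [eventually_ge_atTop 1] with n hn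
    have hnR : (0:ℝ) < n := by exact_mod_cast hn
    calc ((n / D : ℕ):ℝ)/n ≤ ((n:ℝ)/D)/n := by gcongr; exact Nat.cast_div_le
      _ = 1/D := by rw [div_div, mul_comm, ← div_div, div_self (ne_of_gt hnR)]

lemma nthPrime_injOn {a b : ℕ} (ha : 1 ≤ a) (hb : 1 ≤ b) (h : nthPrime a = nthPrime b) :
    a = b := by
  unfold nthPrime at h
  have := Nat.nth_injective Nat.infinite_setOf_prime h
  omega

lemma prod_sq_dvd_iff {k j : ℕ} (t : Finset ℕ) (ht : t ⊆ Finset.Icc 1 k) :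
    (∏ i ∈ t, (nthPrime i)^2) ∣ j ↔ ∀ i ∈ t, (nthPrime i)^2 ∣ j := by
  induction t using Finset.induction_on with
  | empty => simp
  | @insert a s ha ih =>
    have hsub : s ⊆ Finset.Icc 1 k := (Finset.subset_insert a s).trans ht
    have haI : a ∈ Finset.Icc 1 k := ht (Finset.mem_insert_self a s)
    rw [Finset.prod_insert ha]
    constructor
    · intro h i hi
      rcases Finset.mem_insert.mp hi with rfl | hi
      · exact (dvd_mul_right _ _).trans h
      · exact ((ih hsub).mp ((dvd_mul_left _ _).trans h)) i hi
    · intro h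
      have hcop : Nat.Coprime ((nthPrime a)^2) (∏ i ∈ s, (nthPrime i)^2) := by
        apply Nat.Coprime.prod_right
        intro i hi
        have hne : nthPrime a ≠ nthPrime i := by
          intro he
          have h1 : (1:ℕ) ≤ a := (Finset.mem_Icc.mp haI).1
          have h2 : (1:ℕ) ≤ i := (Finset.mem_Icc.mp (hsub hi)).1
          exact ha (nthPrime_injOn h1 h2 he ▸ hi)
        exact ((Nat.coprime_primes (Nat.prime_nth_prime _)
          (Nat.prime_nth_prime _)).mpr hne).pow 2 2
      exact hcop.mul_dvd_of_dvd_of_dvd (h a (Finset.mem_insert_self a s))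
        ((ih hsub).mpr fun i hi => h i (Finset.mem_insert_of_mem hi))

lemma sum_indicator_prod {k n : ℕ} (t : Finset ℕ) (ht : t ⊆ Finset.Icc 1 k) :
    ∑ j ∈ Finset.Icc 1 n, ∏ i ∈ t, (-(if (nthPrime i)^2 ∣ j then (1:ℝ) else 0)) =
      (-1)^t.card * ((n / ∏ i ∈ t, (nthPrime i)^2 : ℕ) : ℝ) := by
  have key : ∀ j, ∏ i ∈ t, (-(if (nthPrime i)^2 ∣ j then (1:ℝ) else 0)) =
      (-1)^t.card * (if (∏ i ∈ t, (nthPrime i)^2) ∣ j then (1:ℝ) else 0) := by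
    intro j
    rw [show (fun i => -(if (nthPrime i)^2 ∣ j then (1:ℝ) else 0)) =
        (fun i => (-1) * (if (nthPrime i)^2 ∣ j then (1:ℝ) else 0)) from by funext i; ring]
    rw [Finset.prod_mul_distrib, Finset.prod_const]
    congr 1
    by_cases h : (∏ i ∈ t, (nthPrime i)^2) ∣ j
    · rw [if_pos h]
      exact Finset.prod_eq_one fun i hi => if_pos (((prod_sq_dvd_iff t ht).mp h) i hi)
    · rw [if_neg h]
      rw [prod_sq_dvd_iff t ht] at h
      push_neg at h
      obtain ⟨i, hi, hnd⟩ := h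
      exact Finset.prod_eq_zero hi (if_neg hnd)
  simp_rw [key, ← Finset.mul_sum]
  congr 1
  rw [Finset.sum_boole]
  congr 1
  rw [show Finset.Icc 1 n = Finset.Ioc 0 n from rfl]
  exact Nat.Ioc_filter_dvd_card_eq_div n _

/-- The averages `(1/n)·∑_{j=1}^{n} |μ̃_k(j)|` converge to `∏_{i=1}^{k} (1 - 1/p_i²)`. -/
theorem mobiusP_abs_average_tendsto (k : ℕ) (hk : 1 ≤ k) :
    Tendsto (fun n : ℕ => (∑ j ∈ Finset.Icc 1 n, |(mobiusP k j : ℝ)|) / n) atTop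
      (nhds (∏ i ∈ Finset.Icc 1 k, (1 - 1 / (nthPrime i : ℝ) ^ 2))) := by
  set s : Finset ℕ := Finset.Icc 1 k with hs
  -- Step 1: rewrite the sum
  have hsum : ∀ n : ℕ, (∑ j ∈ Finset.Icc 1 n, |(mobiusP k j : ℝ)|) =
      ∑ t ∈ s.powerset, (-1)^t.card * ((n / ∏ i ∈ t, (nthPrime i)^2 : ℕ) : ℝ) := by
    intro n
    have h1 : ∀ j ∈ Finset.Icc 1 n, |(mobiusP k j : ℝ)| =
        ∏ i ∈ s, ((-(if (nthPrime i)^2 ∣ j then (1:ℝ) else 0)) + 1) := by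
      intro j hj
      have hj1 : j ≠ 0 := by have := (Finset.mem_Icc.mp hj).1; omega
      rw [abs_mobiusP hk hj1]
      apply Finset.prod_congr rfl
      intro i _
      split <;> norm_num
    rw [Finset.sum_congr rfl h1]
    have h2 : ∀ j : ℕ, ∏ i ∈ s, ((-(if (nthPrime i)^2 ∣ j then (1:ℝ) else 0)) + 1) =
        ∑ t ∈ s.powerset, ∏ i ∈ t, (-(if (nthPrime i)^2 ∣ j then (1:ℝ) else 0)) := by
      intro j
      rw [Finset.prod_add]
      simp
    rw [Finset.sum_congr rfl fun j _ => h2 j, Finset.sum_comm]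
    apply Finset.sum_congr rfl
    intro t ht
    exact sum_indicator_prod t (Finset.mem_powerset.mp ht)
  -- Step 2: the limit value
  have hval : (∏ i ∈ s, (1 - 1 / (nthPrime i : ℝ) ^ 2)) =
      ∑ t ∈ s.powerset, (-1)^t.card * (1 / ((∏ i ∈ t, (nthPrime i)^2 : ℕ) : ℝ)) := by
    have h1 : ∀ i ∈ s, (1 - 1 / (nthPrime i : ℝ) ^ 2) =
        (-(1 / (nthPrime i : ℝ) ^ 2)) + 1 := by intro i _; ring
    rw [Finset.prod_congr rfl h1, Finset.prod_add]
    apply Finset.sum_congr rfl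
    intro t ht
    rw [Finset.prod_const_one, mul_one]
    have : ∀ i ∈ t, -(1 / (nthPrime i : ℝ) ^ 2) = (-1) * (1 / (nthPrime i : ℝ) ^ 2) := by
      intro i _; ring
    rw [Finset.prod_congr rfl this, Finset.prod_mul_distrib, Finset.prod_const]
    congr 1
    push_cast
    rw [one_div, ← Finset.prod_inv_distrib]
    apply Finset.prod_congr rfl
    intro i _
    rw [one_div]
  rw [hval]
  have heq : (fun n : ℕ => (∑ j ∈ Finset.Icc 1 n, |(mobiusP k j : ℝ)|) / n) =
      fun n : ℕ => ∑ t ∈ s.powerset,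
        ((-1:ℝ)^t.card * ((n / ∏ i ∈ t, (nthPrime i)^2 : ℕ) : ℝ)) / n := by
    funext n
    rw [hsum n, Finset.sum_div]
  rw [heq]
  apply tendsto_finset_sum
  intro t ht
  have hD : 0 < ∏ i ∈ t, (nthPrime i)^2 := by
    apply Finset.prod_pos
    intro i _
    exact pow_pos (Nat.prime_nth_prime _).pos 2
  have := (tendsto_nat_div_div hD).const_mul ((-1:ℝ)^t.card)
  simpa [mul_div_assoc] using this
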